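/- Let M̄ = (M₀, M₁, d_{M₀}, d_{M₁}) be a matrix factorization with potential ω ∈ R and N̄ = (N₀, N₁, d_{N₀}, d_{N₁}) a matrix factorization with potential ω′ ∈ R over the same commutative ring R. Define the tensor product M̄ ⊠ N̄ with degree-0 part M₀⊗N₀ ⊕ M₁⊗N₁, degree-1 part M₁⊗N₀ ⊕ M₀⊗N₁, and differentials given by the matrices ((d_{M₀}⊗1, -1⊗d_{N₁}), (1⊗d_{N₀}, d_{M₁}⊗1)) and ((d_{M₁}⊗1, 1⊗d_{N₁}), (-1⊗d_{N₀}, d_{M₀}⊗1)). Then M̄ ⊠ N̄ is a matrix factorization with potential ω + ω′. -/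
import Mathlib


open TensorProduct

/-- Degree-0 differential of the tensor product `M̄ ⊠ N̄` of matrix factorizations,
given by the matrix ((d_{M₀}⊗1, -1⊗d_{N₁}), (1⊗d_{N₀}, d_{M₁}⊗1)). -/
noncomputable def tensD0 (R : Type*) [CommRing R]
    (M0 M1 N0 N1 : Type*) [AddCommGroup M0] [AddCommGroup M1] [AddCommGroup N0]
    [AddCommGroup N1] [Module R M0] [Module R M1] [Module R N0] [Module R N1]
    (dM0 : M0 →ₗ[R] M1) (dM1 : M1 →ₗ[R] M0) (dN0 : N0 →ₗ[R] N1) (dN1 : N1 →ₗ[R] N0) :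
    (M0 ⊗[R] N0) × (M1 ⊗[R] N1) →ₗ[R] (M1 ⊗[R] N0) × (M0 ⊗[R] N1) :=
  LinearMap.prod
    ((TensorProduct.map dM0 LinearMap.id) ∘ₗ (LinearMap.fst R _ _)
      - (TensorProduct.map LinearMap.id dN1) ∘ₗ (LinearMap.snd R _ _))
    ((TensorProduct.map LinearMap.id dN0) ∘ₗ (LinearMap.fst R _ _)
      + (TensorProduct.map dM1 LinearMap.id) ∘ₗ (LinearMap.snd R _ _))

/-- Degree-1 differential of the tensor product `M̄ ⊠ N̄` of matrix factorizations,
given by the matrix ((d_{M₁}⊗1, 1⊗d_{N₁}), (-1⊗d_{N₀}, d_{M₀}⊗1)). -/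
noncomputable def tensD1 (R : Type*) [CommRing R]
    (M0 M1 N0 N1 : Type*) [AddCommGroup M0] [AddCommGroup M1] [AddCommGroup N0]
    [AddCommGroup N1] [Module R M0] [Module R M1] [Module R N0] [Module R N1]
    (dM0 : M0 →ₗ[R] M1) (dM1 : M1 →ₗ[R] M0) (dN0 : N0 →ₗ[R] N1) (dN1 : N1 →ₗ[R] N0) :
    (M1 ⊗[R] N0) × (M0 ⊗[R] N1) →ₗ[R] (M0 ⊗[R] N0) × (M1 ⊗[R] N1) :=
  LinearMap.prod
    ((TensorProduct.map dM1 LinearMap.id) ∘ₗ (LinearMap.fst R _ _)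
      + (TensorProduct.map LinearMap.id dN1) ∘ₗ (LinearMap.snd R _ _))
    ((TensorProduct.map dM0 LinearMap.id) ∘ₗ (LinearMap.snd R _ _)
      - (TensorProduct.map LinearMap.id dN0) ∘ₗ (LinearMap.fst R _ _))

/-- The tensor product `M̄ ⊠ N̄` of a matrix factorization with potential `ω`
and one with potential `ω′` is a matrix factorization with potential `ω + ω′`. -/
theorem tensor_product_is_matrix_factorization
    {R : Type*} [CommRing R] (ω ω' : R)
    {M0 M1 N0 N1 : Type*} [AddCommGroup M0] [AddCommGroup M1] [AddCommGroup N0]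
    [AddCommGroup N1] [Module R M0] [Module R M1] [Module R N0] [Module R N1]
    (dM0 : M0 →ₗ[R] M1) (dM1 : M1 →ₗ[R] M0) (dN0 : N0 →ₗ[R] N1) (dN1 : N1 →ₗ[R] N0)
    (hM10 : dM1 ∘ₗ dM0 = ω • (LinearMap.id : M0 →ₗ[R] M0))
    (hM01 : dM0 ∘ₗ dM1 = ω • (LinearMap.id : M1 →ₗ[R] M1))
    (hN10 : dN1 ∘ₗ dN0 = ω' • (LinearMap.id : N0 →ₗ[R] N0))
    (hN01 : dN0 ∘ₗ dN1 = ω' • (LinearMap.id : N1 →ₗ[R] N1)) :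
    tensD1 R M0 M1 N0 N1 dM0 dM1 dN0 dN1 ∘ₗ tensD0 R M0 M1 N0 N1 dM0 dM1 dN0 dN1
      = (ω + ω') • LinearMap.id ∧
    tensD0 R M0 M1 N0 N1 dM0 dM1 dN0 dN1 ∘ₗ tensD1 R M0 M1 N0 N1 dM0 dM1 dN0 dN1
      = (ω + ω') • LinearMap.id := by
  have hM10' : ∀ x, dM1 (dM0 x) = ω • x := fun x => congrFun (congrArg DFunLike.coe hM10) x
  have hM01' : ∀ x, dM0 (dM1 x) = ω • x := fun x => congrFun (congrArg DFunLike.coe hM01) x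
  have hN10' : ∀ x, dN1 (dN0 x) = ω' • x := fun x => congrFun (congrArg DFunLike.coe hN10) x
  have hN01' : ∀ x, dN0 (dN1 x) = ω' • x := fun x => congrFun (congrArg DFunLike.coe hN01) x
  constructor <;>
  · ext x y <;>
    simp [tensD0, tensD1, hM10', hM01', hN10', hN01', TensorProduct.smul_tmul',
      TensorProduct.tmul_smul, add_smul, smul_smul] <;>
    abel
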